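/- Let V ⊆ EuclideanSpace ℝ (Fin 5) be the set of all coordinate permutations of the point (1,1,1,0,0). Then the set of extreme points of the convex hull of V is exactly V; in particular the Euclidean rectified 5-cell convexHull ℝ V has precisely 10 vertices. -/

import Mathlib

noncomputable section

/-- The vertex set of the Euclidean rectified 5-cell: all coordinate
permutations of the point `(1,1,1,0,0)`. -/
def V : Set (EuclideanSpace ℝ (Fin 5)) :=
  {x | (∀ i, x i = 0 ∨ x i = 1) ∧ (∑ i, x i) = 3}

noncomputable instance : DecidableEq (EuclideanSpace ℝ (Fin 5)) := Classical.decEq _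

/-- indicator vertex -/
def vert (s : Finset (Fin 5)) : EuclideanSpace ℝ (Fin 5) := WithLp.toLp 2 (fun i => if i ∈ s then (1:ℝ) else 0)

lemma vert_inj : Function.Injective vert := by
  intro s t h
  ext i
  have h' := congrArg (fun y : EuclideanSpace ℝ (Fin 5) => y i) h
  simp only [vert] at h'
  by_cases hs : i ∈ s <;> by_cases ht : i ∈ t <;> simp [hs, ht] at h' ⊢ <;> norm_num at h'

lemma V_eq : V = ↑((Finset.univ.powersetCard 3).image vert) := by
  ext x
  simp only [Finset.coe_image, Set.mem_image, Finset.mem_coe, Finset.mem_powersetCard,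
    Finset.subset_univ, true_and, V, Set.mem_setOf_eq]
  constructor
  · rintro ⟨h01, hsum⟩
    refine ⟨Finset.univ.filter (fun i => x i = 1), ?_, ?_⟩
    · have : (∑ i, x i) = ((Finset.univ.filter (fun i => x i = 1)).card : ℝ) := by
        rw [← Finset.sum_boole]
        refine Finset.sum_congr rfl fun i _ => ?_
        rcases h01 i with h | h <;> simp [h]
      rw [this] at hsum
      exact_mod_cast hsum
    · ext i
      rcases h01 i with h | h <;> simp [vert, h]
  · rintro ⟨s, hcard, rfl⟩
    constructor
    · intro i
      by_cases h : i ∈ s <;> simp [vert, h]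
    · have : (∑ i, vert s i) = (s.card : ℝ) := by
        simp only [vert, PiLp.toLp_apply]
        rw [Finset.sum_boole]
        congr 1
        simp
      rw [this, hcard]; norm_num

/-- the linear functional used to separate `v` -/
def f (v x : EuclideanSpace ℝ (Fin 5)) : ℝ := ∑ i, (2 * v i - 1) * x i

lemma f_comb (v x y : EuclideanSpace ℝ (Fin 5)) (a b : ℝ) :
    f v (a • x + b • y) = a * f v x + b * f v y := by
  simp only [f, Finset.mul_sum, ← Finset.sum_add_distrib]
  refine Finset.sum_congr rfl fun i _ => ?_
  have hx : (a • x + b • y) i = a * x i + b * y i := by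
    simp [PiLp.add_apply, PiLp.smul_apply, smul_eq_mul]
  rw [hx]; ring

lemma f_self {v : EuclideanSpace ℝ (Fin 5)} (hv : v ∈ V) : f v v = 3 := by
  have : f v v = ∑ i, v i := by
    refine Finset.sum_congr rfl fun i _ => ?_
    rcases hv.1 i with h | h <;> simp [h] <;> ring
  rw [this, hv.2]

lemma box_mem {x : EuclideanSpace ℝ (Fin 5)} (hx : x ∈ convexHull ℝ V) (i : Fin 5) :
    x i ∈ Set.Icc (0:ℝ) 1 := by
  have hconv : Convex ℝ {y : EuclideanSpace ℝ (Fin 5) | ∀ j, y j ∈ Set.Icc (0:ℝ) 1} := by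
    intro p hp q hq a b ha hb hab j
    have h : (a • p + b • q) j = a * p j + b * q j := by
      simp [PiLp.add_apply, PiLp.smul_apply, smul_eq_mul]
    have := (convex_Icc (0:ℝ) 1) (hp j) (hq j) ha hb hab
    simpa [h, smul_eq_mul] using this
  have hsub : V ⊆ {y : EuclideanSpace ℝ (Fin 5) | ∀ j, y j ∈ Set.Icc (0:ℝ) 1} := by
    intro y hy j
    rcases hy.1 j with h | h <;> simp [h]
  exact convexHull_min hsub hconv hx i

lemma f_le {v : EuclideanSpace ℝ (Fin 5)} (hv : v ∈ V) {x : EuclideanSpace ℝ (Fin 5)}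
    (hx : x ∈ convexHull ℝ V) : f v x ≤ 3 := by
  rw [← hv.2]
  have h01 := fun i => box_mem hx i
  calc f v x ≤ ∑ i, v i := by
        refine Finset.sum_le_sum fun i _ => ?_
        rcases hv.1 i with h | h
        · have := (h01 i).1
          nlinarith [(h01 i).1]
        · nlinarith [(h01 i).2]

lemma f_eq_imp {v : EuclideanSpace ℝ (Fin 5)} (hv : v ∈ V) {x : EuclideanSpace ℝ (Fin 5)}
    (hx : x ∈ convexHull ℝ V) (hfx : f v x = 3) : x = v := by
  have h01 := fun i => box_mem hx i
  have hle : ∀ i ∈ Finset.univ, (2 * v i - 1) * x i ≤ v i := by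
    intro i _
    rcases hv.1 i with h | h
    · nlinarith [(h01 i).1]
    · nlinarith [(h01 i).2]
  have hsum : (∑ i, (2 * v i - 1) * x i) = ∑ i, v i := by
    rw [show (∑ i, (2 * v i - 1) * x i) = f v x from rfl, hfx, hv.2]
  have heq := (Finset.sum_eq_sum_iff_of_le hle).1 hsum
  ext i
  have h := (heq i (Finset.mem_univ i))
  rcases hv.1 i with h0 | h1
  · rw [h0] at h ⊢; nlinarith
  · rw [h1] at h ⊢; nlinarith

theorem extremePoints_rectified5cell :
    Set.extremePoints ℝ (convexHull ℝ V) = V ∧ V.ncard = 10 := by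
  constructor
  · apply Set.Subset.antisymm extremePoints_convexHull_subset
    intro v hv
    rw [mem_extremePoints_iff_forall_segment]
    refine ⟨subset_convexHull ℝ V hv, fun x₁ hx₁ x₂ hx₂ hseg => ?_⟩
    obtain ⟨a, b, ha, hb, hab, hcomb⟩ := hseg
    have hf : a * f v x₁ + b * f v x₂ = 3 := by
      rw [← f_comb, hcomb, f_self hv]
    have h1 := f_le hv hx₁
    have h2 := f_le hv hx₂
    rcases eq_or_lt_of_le ha with ha0 | ha0
    · right
      have hb1 : b = 1 := by linarith
      rw [← ha0, hb1, zero_smul, zero_add, one_smul] at hcomb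
      exact hcomb
    · left
      have : f v x₁ = 3 := by nlinarith
      exact f_eq_imp hv hx₁ this
  · rw [V_eq, Set.ncard_coe_finset, Finset.card_image_of_injective _ vert_inj,
      Finset.card_powersetCard, Finset.card_univ, Fintype.card_fin]
    decide
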